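/- Let F be a (possibly infinitely generated) free group and B a finitely related group with H_2(B;Q) = 0, and let φ: F → B induce a monomorphism on H_1(−;Q). If for some finite n the induced map F/F^{(n)} → B/B^{(n)} has nontrivial kernel, then there is a finitely generated free subgroup G of F (free on the letters of a word representing a kernel element) such that φ restricted to G induces a monomorphism on H_1(−;Q) and the map G/G^{(n)} → B/B^{(n)} has nontrivial kernel. -/

import Mathlib

open FreeGroup in
lemma mk_mem_closure_of_letters {α : Type} (T : Set α) :
    ∀ L : List (α × Bool), (∀ p ∈ L, p.1 ∈ T) →
      FreeGroup.mk L ∈ Subgroup.closure (FreeGroup.of '' T) := by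
  intro L
  induction L with
  | nil => intro _; exact (Subgroup.one_mem _)
  | cons x L ih =>
    intro h
    have hx : x.1 ∈ T := h x List.mem_cons_self
    have hL : FreeGroup.mk L ∈ Subgroup.closure (FreeGroup.of '' T) :=
      ih fun p hp => h p (List.mem_cons_of_mem _ hp)
    have hsplit : FreeGroup.mk (x :: L) = FreeGroup.mk [x] * FreeGroup.mk L := by
      rw [FreeGroup.mul_mk]; rfl
    rw [hsplit]
    refine Subgroup.mul_mem _ ?_ hL
    have hof : FreeGroup.of x.1 ∈ Subgroup.closure (FreeGroup.of '' T) :=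
      Subgroup.subset_closure ⟨x.1, hx, rfl⟩
    rcases x with ⟨a, b⟩
    cases b with
    | true => exact hof
    | false =>
      have : FreeGroup.mk [(a, false)] = (FreeGroup.of a)⁻¹ := by
        have : (FreeGroup.of a)⁻¹ = FreeGroup.mk (FreeGroup.invRev [(a, true)]) :=
          FreeGroup.inv_mk
        simpa [FreeGroup.invRev] using this.symm
      rw [this]
      exact Subgroup.inv_mem _ hof

theorem free_subgroup_reduction
    (α : Type) (B : Type) [Group B]
    (X : Type) (S : Set (FreeGroup X)) (hS : S.Finite)
    (q : FreeGroup X →* B) (hq : Function.Surjective q)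
    (hker : q.ker = Subgroup.normalClosure S)
    (hH2 : ∀ x : FreeGroup X, x ∈ q.ker → x ∈ commutator (FreeGroup X) →
      ∃ k : ℕ, 0 < k ∧ x ^ k ∈ ⁅q.ker, (⊤ : Subgroup (FreeGroup X))⁆)
    (φ : FreeGroup α →* B)
    (hH1 : ∀ a : FreeGroup α,
      (∃ k : ℕ, 0 < k ∧ (φ a) ^ k ∈ commutator B) →
      ∃ k : ℕ, 0 < k ∧ a ^ k ∈ commutator (FreeGroup α))
    (n : ℕ)
    (hkernel : ∃ w : FreeGroup α,
      w ∉ derivedSeries (FreeGroup α) n ∧ φ w ∈ derivedSeries B n) :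
    ∃ s : Finset α,
      ∀ G : Subgroup (FreeGroup α),
        G = Subgroup.closure (FreeGroup.of '' (s : Set α)) →
        (∀ g : G, (∃ k : ℕ, 0 < k ∧ (φ (g : FreeGroup α)) ^ k ∈ commutator B) →
          ∃ k : ℕ, 0 < k ∧ g ^ k ∈ commutator G) ∧
        ∃ g : G, g ∉ derivedSeries G n ∧ φ (g : FreeGroup α) ∈ derivedSeries B n := by
  classical
  obtain ⟨w, hwF, hwB⟩ := hkernel
  refine ⟨(w.toWord.map Prod.fst).toFinset, ?_⟩
  intro G hG
  -- w belongs to G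
  have hwG : w ∈ G := by
    have h1 := mk_mem_closure_of_letters
      (((w.toWord.map Prod.fst).toFinset : Finset α) : Set α) w.toWord
      (fun p hp => by
        simp only [Finset.mem_coe, List.mem_toFinset, List.mem_map]
        exact ⟨p, hp, rfl⟩)
    rw [FreeGroup.mk_toWord] at h1
    rw [hG]; exact h1
  -- retraction onto G
  set T : Set α := (((w.toWord.map Prod.fst).toFinset : Finset α) : Set α) with hT
  let r : FreeGroup α →* FreeGroup α :=
    FreeGroup.lift (fun a => if a ∈ T then FreeGroup.of a else 1)
  have hrG : ∀ x : FreeGroup α, r x ∈ G := by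
    intro x
    induction x using FreeGroup.induction_on with
    | C1 => simpa using Subgroup.one_mem G
    | of a =>
      show r (FreeGroup.of a) ∈ G
      rw [show r (FreeGroup.of a) = if a ∈ T then FreeGroup.of a else 1 from
        FreeGroup.lift_apply_of]
      split
      · rw [hG]; exact Subgroup.subset_closure ⟨a, by assumption, rfl⟩
      · exact Subgroup.one_mem G
    | inv_of a h => rw [map_inv]; exact Subgroup.inv_mem G h
    | mul x y hx hy => rw [map_mul]; exact Subgroup.mul_mem G hx hy
  have hrfix : ∀ x ∈ G, r x = x := by
    intro x hx
    rw [hG] at hx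
    induction hx using Subgroup.closure_induction with
    | mem y hy =>
      obtain ⟨a, ha, rfl⟩ := hy
      show r (FreeGroup.of a) = FreeGroup.of a
      rw [show r (FreeGroup.of a) = if a ∈ T then FreeGroup.of a else 1 from
        FreeGroup.lift_apply_of, if_pos ha]
    | one => simp
    | mul x y _ _ hx hy => rw [map_mul, hx, hy]
    | inv x _ hx => rw [map_inv, hx]
  let π : FreeGroup α →* G := r.codRestrict G hrG
  have hπid : ∀ g : G, π (g : FreeGroup α) = g := by
    intro g
    ext
    exact hrfix _ g.2
  constructor
  · -- H1 injectivity for G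
    intro g hg
    obtain ⟨k, hk, hcomm⟩ := hH1 (g : FreeGroup α) hg
    refine ⟨k, hk, ?_⟩
    have : π ((g : FreeGroup α) ^ k) ∈ (commutator (FreeGroup α)).map π :=
      Subgroup.mem_map_of_mem π hcomm
    have hle : (commutator (FreeGroup α)).map π ≤ commutator G := by
      rw [commutator, Subgroup.map_commutator]
      exact Subgroup.commutator_mono le_top le_top
    have := hle this
    rwa [map_pow, hπid] at this
  · -- nontrivial kernel element
    refine ⟨⟨w, hwG⟩, ?_, hwB⟩
    intro hder
    apply hwF
    have : (⟨w, hwG⟩ : G).val ∈ (derivedSeries G n).map G.subtype :=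
      Subgroup.mem_map_of_mem G.subtype hder
    exact map_derivedSeries_le_derivedSeries G.subtype n this
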